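/- Let 0 < p < q be coprime integers, let (c_2, …, c_{e-1}) with all c_i ≥ 2 be the Hirzebruch–Jung continued fraction expansion of q/p, and let (a_1, …, a_r) with all a_j ≥ 2 be the Hirzebruch–Jung continued fraction expansion of q/(q−p). Then r = Σ_{i=2}^{e-1} (c_i − 1) − (e − 3), i.e. r + (e − 3) = Σ_{i=2}^{e-1} (c_i − 1). -/

import Mathlib

/-- The value of a Hirzebruch–Jung (negative-regular) continued fraction
`c₁ - 1/(c₂ - 1/(⋯ - 1/cₖ))`. -/
def hjVal : List ℤ → ℚ
  | [] => 0
  | [c] => (c : ℚ)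
  | c :: rest => (c : ℚ) - 1 / hjVal rest

lemma hjVal_cons (c a : ℤ) (t : List ℤ) :
    hjVal (c :: a :: t) = (c : ℚ) - 1 / hjVal (a :: t) := rfl

lemma hjVal_singleton (c : ℤ) : hjVal [c] = (c : ℚ) := rfl

lemma one_lt_hjVal : ∀ L : List ℤ, L ≠ [] → (∀ c ∈ L, 2 ≤ c) → 1 < hjVal L
  | [], h, _ => absurd rfl h
  | [c], _, h2 => by
      have hc : (2:ℚ) ≤ (c:ℚ) := by exact_mod_cast h2 c (by simp)
      rw [hjVal_singleton]; linarith
  | c :: a :: t, _, h2 => by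
      have ih := one_lt_hjVal (a :: t) (by simp) (fun x hx => h2 x (by simp [hx]))
      have hc : (2:ℚ) ≤ (c:ℚ) := by exact_mod_cast h2 c (by simp)
      rw [hjVal_cons]
      have h0 : 0 < hjVal (a :: t) := by linarith
      have h1 : 1 / hjVal (a :: t) < 1 := by rw [div_lt_one h0]; linarith
      linarith

lemma hjVal_le_head (c : ℤ) (t : List ℤ) (h2 : ∀ x ∈ c :: t, 2 ≤ x) :
    hjVal (c :: t) ≤ (c : ℚ) := by
  cases t with
  | nil => rw [hjVal_singleton]
  | cons a t =>
      have ih := one_lt_hjVal (a :: t) (by simp) (fun x hx => h2 x (by simp [hx]))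
      rw [hjVal_cons]
      have h0 : 0 < 1 / hjVal (a :: t) := by positivity
      linarith

lemma hjVal_lt_head (c a : ℤ) (t : List ℤ) (h2 : ∀ x ∈ c :: a :: t, 2 ≤ x) :
    hjVal (c :: a :: t) < (c : ℚ) := by
  have ih := one_lt_hjVal (a :: t) (by simp) (fun x hx => h2 x (by simp [hx]))
  rw [hjVal_cons]
  have h0 : 0 < 1 / hjVal (a :: t) := by positivity
  linarith

lemma head_sub_one_lt (c : ℤ) (t : List ℤ) (h2 : ∀ x ∈ c :: t, 2 ≤ x) :
    (c : ℚ) - 1 < hjVal (c :: t) := by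
  cases t with
  | nil => rw [hjVal_singleton]; linarith
  | cons a t =>
      have ih := one_lt_hjVal (a :: t) (by simp) (fun x hx => h2 x (by simp [hx]))
      rw [hjVal_cons]
      have h0 : 0 < hjVal (a :: t) := by linarith
      have h1 : 1 / hjVal (a :: t) < 1 := by rw [div_lt_one h0]; linarith
      linarith

lemma hjVal_sub_one (c : ℤ) (t : List ℤ) :
    hjVal ((c - 1) :: t) = hjVal (c :: t) - 1 := by
  cases t with
  | nil => rw [hjVal_singleton, hjVal_singleton]; push_cast; ring
  | cons a t => rw [hjVal_cons, hjVal_cons]; push_cast; ring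

lemma key : ∀ n : ℕ, ∀ p q : ℤ, q < (n : ℤ) → 0 < p → p < q → IsCoprime p q →
    ∀ L A : List ℤ, L ≠ [] → (∀ c ∈ L, 2 ≤ c) → hjVal L = (q : ℚ) / (p : ℚ) →
    A ≠ [] → (∀ a ∈ A, 2 ≤ a) → hjVal A = (q : ℚ) / ((q : ℚ) - (p : ℚ)) →
    (A.length : ℤ) + ((L.length : ℤ) - 1) = (L.map (fun c => c - 1)).sum := by
  intro n
  induction n with
  | zero => intro p q hqn hp hpq _; exfalso; omega
  | succ n ih =>
    intro p q hqn hp hpq hcop L A hL1 hL2 hL3 hA1 hA2 hA3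
    obtain ⟨c, t, rfl⟩ := List.exists_cons_of_ne_nil hL1
    obtain ⟨a, s, rfl⟩ := List.exists_cons_of_ne_nil hA1
    have hpQ : (0:ℚ) < (p:ℚ) := by exact_mod_cast hp
    have hqQ : (p:ℚ) < (q:ℚ) := by exact_mod_cast hpq
    have hqpQ : (0:ℚ) < (q:ℚ) - (p:ℚ) := by linarith
    have hc2 : (2:ℚ) ≤ (c:ℚ) := by exact_mod_cast hL2 c (by simp)
    have ha2 : (2:ℚ) ≤ (a:ℚ) := by exact_mod_cast hA2 a (by simp)
    rcases lt_trichotomy (2 * p) q with h | h | h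
    · -- case 2p < q : L = (c)::t with c ≥ 3, A = 2 :: s with s ≠ []
      have hZ : 2 * (p:ℚ) < (q:ℚ) := by exact_mod_cast h
      have hQ : (2:ℚ) < (q:ℚ)/(p:ℚ) := by
        rw [lt_div_iff₀ hpQ]; linarith
      have hle := hjVal_le_head c t hL2
      have hc3 : (3:ℚ) ≤ (c:ℚ) := by
        have : (2:ℚ) < (c:ℚ) := by rw [hL3] at hle; linarith
        exact_mod_cast by exact_mod_cast (by exact_mod_cast this : (2:ℤ) < c)
      -- A side: q/(q-p) < 2, so a = 2 and s ≠ []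
      have hAv : hjVal (a :: s) < 2 := by
        rw [hA3, div_lt_iff₀ hqpQ]; linarith
      have hAv1 : (1:ℚ) < hjVal (a :: s) := one_lt_hjVal _ (by simp) hA2
      have haeq : a = 2 := by
        have h1 := head_sub_one_lt a s hA2
        have : (a:ℚ) < 3 := by linarith
        have h2 : a < 3 := by exact_mod_cast this
        have h3 : (2:ℤ) ≤ a := hA2 a (by simp)
        omega
      subst haeq
      obtain ⟨b, s', rfl⟩ : ∃ b s', s = b :: s' := by
        cases s with
        | nil => exfalso; rw [hjVal_singleton] at hAv; norm_num at hAv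
        | cons b s' => exact ⟨b, s', rfl⟩
      -- hjVal (b::s') = (q-p)/(q-2p)
      have hsne : hjVal (b :: s') ≠ 0 := by
        have := one_lt_hjVal (b :: s') (by simp) (fun x hx => hA2 x (by simp [hx]))
        linarith
      have hq2p : (q:ℚ) - 2*(p:ℚ) ≠ 0 := by
        have : (0:ℚ) < (q:ℚ) - 2*(p:ℚ) := by linarith
        linarith
      have hs_val : hjVal (b :: s') = ((q:ℚ) - (p:ℚ)) / ((q:ℚ) - 2*(p:ℚ)) := by
        rw [hjVal_cons] at hA3
        have hne : ((q:ℚ) - (p:ℚ)) ≠ 0 := by linarith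
        field_simp at hA3
        rw [eq_div_iff hq2p]
        push_cast at hA3
        linarith [hA3]
      -- L₂ = (c-1)::t
      have hL2' : ∀ x ∈ (c - 1) :: t, 2 ≤ x := by
        intro x hx
        rcases List.mem_cons.mp hx with rfl | hx
        · have : (3:ℤ) ≤ c := by exact_mod_cast hc3
          omega
        · exact hL2 x (by simp [hx])
      have hL3' : hjVal ((c - 1) :: t) = ((q - p : ℤ) : ℚ) / (p : ℚ) := by
        rw [hjVal_sub_one, hL3]; push_cast; field_simp
      have hs3 : hjVal (b :: s') = ((q - p : ℤ) : ℚ) / (((q - p : ℤ) : ℚ) - (p : ℚ)) := by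
        rw [hs_val]; push_cast; ring_nf
      have hrec := ih p (q - p) (by omega) hp (by omega)
        (by have := hcop.add_mul_left_right (-1); simpa [sub_eq_add_neg] using this)
        ((c - 1) :: t) (b :: s') (by simp) hL2' hL3' (by simp)
        (fun x hx => hA2 x (by simp [hx])) hs3
      simp only [List.length_cons, List.map_cons, List.sum_cons] at hrec ⊢
      push_cast at hrec ⊢
      linarith [hrec]
    · -- case 2p = q : p = 1, q = 2
      have hpdvd : p ∣ q := ⟨2, by omega⟩
      have hunit : IsUnit p := hcop.isUnit_of_dvd' dvd_rfl hpdvd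
      have hp1 : p = 1 := by
        rcases Int.isUnit_iff.mp hunit with h1 | h1 <;> omega
      have hq2 : q = 2 := by omega
      subst hp1; subst hq2
      norm_num at hL3 hA3
      -- L = [2]
      have hceq : c = 2 := by
        have h1 := head_sub_one_lt c t hL2
        rw [hL3] at h1
        have h2 : c < 3 := by exact_mod_cast (by linarith : (c:ℚ) < 3)
        have h3 : (2:ℤ) ≤ c := hL2 c (by simp)
        omega
      subst hceq
      have htnil : t = [] := by
        cases t with
        | nil => rfl
        | cons x t' =>
            exfalso
            have := hjVal_lt_head 2 x t' hL2
            rw [hL3] at this; norm_num at this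
      have haeq : a = 2 := by
        have h1 := head_sub_one_lt a s hA2
        rw [hA3] at h1
        have h2 : a < 3 := by exact_mod_cast (by linarith : (a:ℚ) < 3)
        have h3 : (2:ℤ) ≤ a := hA2 a (by simp)
        omega
      subst haeq
      have hsnil : s = [] := by
        cases s with
        | nil => rfl
        | cons x s' =>
            exfalso
            have := hjVal_lt_head 2 x s' hA2
            rw [hA3] at this; norm_num at this
      subst htnil; subst hsnil
      decide
    · -- case q < 2p : L = 2::t with t ≠ [], A = (a)::s with a ≥ 3
      have hZ : (q:ℚ) < 2 * (p:ℚ) := by exact_mod_cast h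
      have hQ : (q:ℚ)/(p:ℚ) < 2 := by
        rw [div_lt_iff₀ hpQ]; linarith
      have hceq : c = 2 := by
        have h1 := head_sub_one_lt c t hL2
        rw [hL3] at h1
        have h2 : c < 3 := by exact_mod_cast (by linarith : (c:ℚ) < 3)
        have h3 : (2:ℤ) ≤ c := hL2 c (by simp)
        omega
      subst hceq
      obtain ⟨x, t', rfl⟩ : ∃ x t', t = x :: t' := by
        cases t with
        | nil =>
            exfalso
            rw [hjVal_singleton] at hL3
            have : (q:ℚ) = 2 * (p:ℚ) := by
              field_simp at hL3; push_cast at hL3; linarith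
            have : q = 2 * p := by exact_mod_cast this
            omega
        | cons x t' => exact ⟨x, t', rfl⟩
      -- hjVal (x::t') = p/(2p - q)
      have htne : hjVal (x :: t') ≠ 0 := by
        have := one_lt_hjVal (x :: t') (by simp) (fun y hy => hL2 y (by simp [hy]))
        linarith
      have h2pq : (0:ℚ) < 2*(p:ℚ) - (q:ℚ) := by linarith
      have ht_val : hjVal (x :: t') = ((p : ℤ) : ℚ) / (((2*p - q : ℤ)) : ℚ) := by
        rw [hjVal_cons] at hL3
        have hne : ((2*p - q : ℤ) : ℚ) ≠ 0 := by push_cast; linarith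
        field_simp at hL3 ⊢
        push_cast at hL3 ⊢
        linarith [hL3]
      -- A side: q/(q-p) > 2, so a ≥ 3
      have hAgt : (2:ℚ) < hjVal (a :: s) := by
        rw [hA3, lt_div_iff₀ hqpQ]; linarith
      have hle := hjVal_le_head a s hA2
      have ha3 : (3:ℤ) ≤ a := by
        have : (2:ℚ) < (a:ℚ) := by linarith
        have : (2:ℤ) < a := by exact_mod_cast this
        omega
      have hA2' : ∀ y ∈ (a - 1) :: s, 2 ≤ y := by
        intro y hy
        rcases List.mem_cons.mp hy with rfl | hy
        · omega
        · exact hA2 y (by simp [hy])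
      have hA3' : hjVal ((a - 1) :: s) = ((p : ℤ) : ℚ) / (((p:ℤ) : ℚ) - ((2*p - q : ℤ) : ℚ)) := by
        rw [hjVal_sub_one, hA3]
        have hne : ((q:ℚ) - (p:ℚ)) ≠ 0 := by linarith
        push_cast
        rw [div_sub_one hne]
        rw [show (q:ℚ) - ((q:ℚ) - (p:ℚ)) = (p:ℚ) by ring,
            show (p:ℚ) - (2*(p:ℚ) - (q:ℚ)) = (q:ℚ) - (p:ℚ) by ring]
      have hcop2 : IsCoprime (2*p - q) p := by
        have h1 : IsCoprime (q + p * (-2)) p := hcop.symm.add_mul_left_left (-2)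
        have h2 : IsCoprime (-(q + p * (-2))) p := h1.neg_left
        have : -(q + p * (-2)) = 2*p - q := by ring
        rwa [this] at h2
      have hrec := ih (2*p - q) p (by omega) (by omega) (by omega) hcop2
        (x :: t') ((a - 1) :: s) (by simp)
        (fun y hy => hL2 y (by simp [hy])) ht_val
        (by simp) hA2' hA3'
      simp only [List.length_cons, List.map_cons, List.sum_cons] at hrec ⊢
      push_cast at hrec ⊢
      linarith [hrec]

/-- Riemenschneider duality: if `(c_2,…,c_{e-1})` is the HJ expansion of `q/p` and
`(a_1,…,a_r)` is the HJ expansion of `q/(q-p)`, then `r + (e-3) = Σ (c_i - 1)`. -/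
theorem riemenschneider_duality
    (p q : ℤ) (hp : 0 < p) (hpq : p < q) (hcop : IsCoprime p q)
    (L A : List ℤ)
    (hL : L ≠ [] ∧ (∀ c ∈ L, 2 ≤ c) ∧ hjVal L = (q : ℚ) / (p : ℚ))
    (hA : A ≠ [] ∧ (∀ a ∈ A, 2 ≤ a) ∧ hjVal A = (q : ℚ) / ((q : ℚ) - (p : ℚ))) :
    (A.length : ℤ) + ((L.length : ℤ) - 1) = (L.map (fun c => c - 1)).sum := by
  obtain ⟨hL1, hL2, hL3⟩ := hL
  obtain ⟨hA1, hA2, hA3⟩ := hA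
  exact key (q.toNat + 1) p q (by omega) hp hpq hcop L A hL1 hL2 hL3 hA1 hA2 hA3
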